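/- arXiv:2603.06933 — 5 statements merged into one kernel-verified Lean document; each statement's English description precedes it below -/
import Mathlib

section
/- Let k, γ be real numbers, let M : ℝ → (6×6 real matrices) be a differentiable matrix-valued function such that M(t) is symmetric and invertible for every t and such that |xᵀ M'(t) x| ≤ γ‖x‖² for all t and all x ∈ ℝ⁶, and let e : ℝ → ℝ⁶ be a differentiable function satisfying e'(t) = -k · M(t)⁻¹ · e(t) for all t. Then the Lyapunov function V(t) = e(t)ᵀ M(t) e(t) satisfies the differential inequality V'(t) ≤ -(2k - γ)‖e(t)‖² for all t. -/
open Matrix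

/-- Euclidean norm of a vector in `ℝⁿ` (identified with `Fin n → ℝ`). -/
noncomputable def eNorm {n : ℕ} (x : Fin n → ℝ) : ℝ := Real.sqrt (x ⬝ᵥ x)

/-- Entrywise derivative of a matrix-valued function. -/
noncomputable def matDeriv {n : ℕ} (M : ℝ → Matrix (Fin n) (Fin n) ℝ) (t : ℝ) :
    Matrix (Fin n) (Fin n) ℝ :=
  Matrix.of fun i j => deriv (fun s => M s i j) t

/-- eq. (32): under the inertia-rate bound `|xᵀ Ṁ x| ≤ γ‖x‖²`, the
Lyapunov function `V = eᵀ M e` of the error dynamics `ė = -k M⁻¹ e` satisfies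
`V̇ ≤ -(2k - γ)‖e‖²`. -/
theorem lyapunov_decay_estimate
    (k γ : ℝ) (M : ℝ → Matrix (Fin 6) (Fin 6) ℝ)
    (hMdiff : ∀ i j, Differentiable ℝ fun t => M t i j)
    (hMsymm : ∀ t, (M t).IsSymm)
    (hMinv : ∀ t, IsUnit (M t).det)
    (hMrate : ∀ t, ∀ x : Fin 6 → ℝ, |x ⬝ᵥ (matDeriv M t).mulVec x| ≤ γ * eNorm x ^ 2)
    (e : ℝ → Fin 6 → ℝ) (he : Differentiable ℝ e)
    (hdyn : ∀ t, deriv e t = (-k) • (M t)⁻¹.mulVec (e t)) :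
    ∀ t, deriv (fun s => e s ⬝ᵥ (M s).mulVec (e s)) t
        ≤ -(2 * k - γ) * eNorm (e t) ^ 2 := by
  intro t
  set e' : Fin 6 → ℝ := deriv e t with he'
  have hE : HasDerivAt e e' t := (he t).hasDerivAt
  have hEi : ∀ i, HasDerivAt (fun s => e s i) (e' i) t := fun i =>
    (hasDerivAt_pi.mp hE) i
  have hMij : ∀ i j, HasDerivAt (fun s => M s i j) (matDeriv M t i j) t := fun i j => by
    simpa [matDeriv] using ((hMdiff i j) t).hasDerivAt
  -- derivative of each summand
  have hsum : HasDerivAt (fun s => ∑ i, ∑ j, e s i * (M s i j * e s j))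
      (∑ i, ∑ j, (e' i * (M t i j * e t j) +
        e t i * (matDeriv M t i j * e t j + M t i j * e' j))) t := by
    apply HasDerivAt.fun_sum
    intro i _
    apply HasDerivAt.fun_sum
    intro j _
    exact (hEi i).mul ((hMij i j).mul (hEi j))
  have hVfun : (fun s => e s ⬝ᵥ (M s).mulVec (e s))
      = fun s => ∑ i, ∑ j, e s i * (M s i j * e s j) := by
    funext s
    simp [dotProduct, Matrix.mulVec, Finset.mul_sum]
  have hDval : (∑ i, ∑ j, (e' i * (M t i j * e t j) +
        e t i * (matDeriv M t i j * e t j + M t i j * e' j)))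
      = e' ⬝ᵥ (M t).mulVec (e t) + e t ⬝ᵥ (matDeriv M t).mulVec (e t)
        + e t ⬝ᵥ (M t).mulVec e' := by
    simp only [dotProduct, Matrix.mulVec, Finset.mul_sum, ← Finset.sum_add_distrib]
    refine Finset.sum_congr rfl fun i _ => ?_
    refine Finset.sum_congr rfl fun j _ => ?_
    ring
  have hV : deriv (fun s => e s ⬝ᵥ (M s).mulVec (e s)) t
      = e' ⬝ᵥ (M t).mulVec (e t) + e t ⬝ᵥ (matDeriv M t).mulVec (e t)
        + e t ⬝ᵥ (M t).mulVec e' := by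
    rw [hVfun, hsum.deriv, hDval]
  -- compute the first and third terms
  have hMs : (M t)ᵀ = M t := hMsymm t
  have hC : e t ⬝ᵥ (M t).mulVec e' = -k * (e t ⬝ᵥ e t) := by
    rw [he', hdyn t]
    rw [Matrix.mulVec_smul]
    rw [dotProduct_smul]
    rw [Matrix.mulVec_mulVec, Matrix.mul_nonsing_inv (M t) (hMinv t), Matrix.one_mulVec]
    simp
  have h1 : (M t)⁻¹ *ᵥ e t = e t ᵥ* (M t)⁻¹ := by
    rw [← Matrix.mulVec_transpose, Matrix.transpose_nonsing_inv, hMs]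
  have hA : e' ⬝ᵥ (M t).mulVec (e t) = -k * (e t ⬝ᵥ e t) := by
    rw [he', hdyn t, smul_dotProduct, h1, ← Matrix.dotProduct_mulVec,
      Matrix.mulVec_mulVec, Matrix.nonsing_inv_mul (M t) (hMinv t), Matrix.one_mulVec]
    simp
  have hnn : (0:ℝ) ≤ e t ⬝ᵥ e t :=
    Finset.sum_nonneg fun i _ => mul_self_nonneg _
  have hnorm : eNorm (e t) ^ 2 = e t ⬝ᵥ e t := by
    rw [eNorm, Real.sq_sqrt hnn]
  have hB := hMrate t (e t)
  rw [abs_le, hnorm] at hB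
  rw [hV, hA, hC, hnorm]
  nlinarith [hB.2]
end

section
/- Let k, γ, m₀, m₁ be real numbers with m₀ > 0, m₁ > 0 and 2k > γ. Let M : ℝ → (6×6 real matrices) be a differentiable matrix-valued function such that for every t: M(t) is symmetric and invertible, m₀‖x‖² ≤ xᵀ M(t) x ≤ m₁‖x‖² for all x ∈ ℝ⁶, and |xᵀ M'(t) x| ≤ γ‖x‖² for all x ∈ ℝ⁶. Let e : ℝ → ℝ⁶ be differentiable with e'(t) = -k · M(t)⁻¹ · e(t) for all t. Then for all t ≥ 0, the Lyapunov function V(t) = e(t)ᵀ M(t) e(t) satisfies V(t) ≤ V(0) · exp(-((2k-γ)/m₁) t), and consequently ‖e(t)‖² ≤ (m₁/m₀) ‖e(0)‖² · exp(-((2k-γ)/m₁) t). -/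
open Matrix

lemma eNorm_sq {n : ℕ} (x : Fin n → ℝ) : eNorm x ^ 2 = x ⬝ᵥ x := by
  have : (0:ℝ) ≤ x ⬝ᵥ x := Finset.sum_nonneg fun i _ => mul_self_nonneg _
  simp [eNorm, Real.sq_sqrt this]

/-- quantitative exponential convergence of the observer error under the
gain condition `2k > γ` and uniform eigenvalue bounds `m₀‖x‖² ≤ xᵀ M x ≤ m₁‖x‖²`. -/
theorem observer_error_exponential_convergence
    (k γ m₀ m₁ : ℝ) (hm₀ : 0 < m₀) (hm₁ : 0 < m₁) (hk : 2 * k > γ)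
    (M : ℝ → Matrix (Fin 6) (Fin 6) ℝ)
    (hMdiff : ∀ i j, Differentiable ℝ fun t => M t i j)
    (hMsymm : ∀ t, (M t).IsSymm)
    (hMinv : ∀ t, IsUnit (M t).det)
    (hMlb : ∀ t, ∀ x : Fin 6 → ℝ, m₀ * eNorm x ^ 2 ≤ x ⬝ᵥ (M t).mulVec x)
    (hMub : ∀ t, ∀ x : Fin 6 → ℝ, x ⬝ᵥ (M t).mulVec x ≤ m₁ * eNorm x ^ 2)
    (hMrate : ∀ t, ∀ x : Fin 6 → ℝ, |x ⬝ᵥ (matDeriv M t).mulVec x| ≤ γ * eNorm x ^ 2)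
    (e : ℝ → Fin 6 → ℝ) (he : Differentiable ℝ e)
    (hdyn : ∀ t, deriv e t = (-k) • (M t)⁻¹.mulVec (e t)) :
    ∀ t ≥ (0 : ℝ),
      e t ⬝ᵥ (M t).mulVec (e t)
          ≤ (e 0 ⬝ᵥ (M 0).mulVec (e 0)) * Real.exp (-((2 * k - γ) / m₁) * t) ∧
      eNorm (e t) ^ 2
          ≤ (m₁ / m₀) * eNorm (e 0) ^ 2 * Real.exp (-((2 * k - γ) / m₁) * t) := by
  set c : ℝ := (2 * k - γ) / m₁ with hc
  have hcpos : 0 < c := div_pos (by linarith) hm₁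
  set V : ℝ → ℝ := fun s => e s ⬝ᵥ (M s).mulVec (e s) with hV
  -- derivative of V
  have hVderiv : ∀ t, HasDerivAt V
      (deriv e t ⬝ᵥ (M t).mulVec (e t) + e t ⬝ᵥ (matDeriv M t).mulVec (e t)
        + e t ⬝ᵥ (M t).mulVec (deriv e t)) t := by
    intro t
    have hei : ∀ i, HasDerivAt (fun s => e s i) (deriv e t i) t :=
      fun i => (hasDerivAt_pi.mp (he t).hasDerivAt) i
    have hMij : ∀ i j, HasDerivAt (fun s => M s i j) (matDeriv M t i j) t :=
      fun i j => (hMdiff i j t).hasDerivAt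
    have key : HasDerivAt (fun s => ∑ i, ∑ j, e s i * (M s i j * e s j))
        (∑ i, ∑ j, (deriv e t i * (M t i j * e t j) +
          e t i * (matDeriv M t i j * e t j + M t i j * deriv e t j))) t := by
      apply HasDerivAt.fun_sum; intro i _; apply HasDerivAt.fun_sum; intro j _
      exact (hei i).mul ((hMij i j).mul (hei j))
    have hfun : V = fun s => ∑ i, ∑ j, e s i * (M s i j * e s j) := by
      funext s
      simp [hV, dotProduct, Matrix.mulVec, Finset.mul_sum]
    rw [hfun]
    convert key using 1
    simp only [dotProduct, Matrix.mulVec, Finset.mul_sum]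
    rw [← Finset.sum_add_distrib, ← Finset.sum_add_distrib]
    refine Finset.sum_congr rfl fun i _ => ?_
    rw [← Finset.sum_add_distrib, ← Finset.sum_add_distrib]
    refine Finset.sum_congr rfl fun j _ => ?_
    ring
  -- the two mixed terms
  have hmix : ∀ t, deriv e t ⬝ᵥ (M t).mulVec (e t) = -k * (e t ⬝ᵥ e t) ∧
      e t ⬝ᵥ (M t).mulVec (deriv e t) = -k * (e t ⬝ᵥ e t) := by
    intro t
    have hsymm : (M t)ᵀ = M t := (hMsymm t)
    have hinvsymm : ((M t)⁻¹)ᵀ = (M t)⁻¹ := by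
      rw [Matrix.transpose_nonsing_inv, hsymm]
    constructor
    · rw [hdyn t, smul_dotProduct, smul_eq_mul]
      congr 1
      calc (M t)⁻¹.mulVec (e t) ⬝ᵥ (M t).mulVec (e t)
          = (e t ᵥ* (M t)⁻¹) ⬝ᵥ (M t).mulVec (e t) := by
            rw [← hinvsymm, Matrix.mulVec_transpose, hinvsymm]
        _ = e t ⬝ᵥ e t := by
            rw [Matrix.dotProduct_mulVec, Matrix.vecMul_vecMul,
              Matrix.nonsing_inv_mul _ (hMinv t), Matrix.vecMul_one]
    · rw [hdyn t, Matrix.mulVec_smul, dotProduct_smul, smul_eq_mul]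
      congr 1
      rw [Matrix.mulVec_mulVec, Matrix.mul_nonsing_inv _ (hMinv t), Matrix.one_mulVec]
  -- g = V * exp(c t) is antitone
  have hg : ∀ t, HasDerivAt (fun s => V s * Real.exp (c * s))
      ((deriv e t ⬝ᵥ (M t).mulVec (e t) + e t ⬝ᵥ (matDeriv M t).mulVec (e t)
        + e t ⬝ᵥ (M t).mulVec (deriv e t)) * Real.exp (c * t)
        + V t * (c * Real.exp (c * t))) t := by
    intro t
    have hexp : HasDerivAt (fun s => Real.exp (c * s)) (c * Real.exp (c * t)) t := by
      simpa [mul_comm] using (((hasDerivAt_id t).const_mul c).exp)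
    exact (hVderiv t).mul hexp
  have hgle : ∀ t, (deriv e t ⬝ᵥ (M t).mulVec (e t) + e t ⬝ᵥ (matDeriv M t).mulVec (e t)
        + e t ⬝ᵥ (M t).mulVec (deriv e t)) * Real.exp (c * t)
        + V t * (c * Real.exp (c * t)) ≤ 0 := by
    intro t
    obtain ⟨h1, h2⟩ := hmix t
    have hN : e t ⬝ᵥ e t = eNorm (e t) ^ 2 := (eNorm_sq _).symm
    have hrate := hMrate t (e t)
    have hub := hMub t (e t)
    have habs : e t ⬝ᵥ (matDeriv M t).mulVec (e t) ≤ γ * eNorm (e t) ^ 2 :=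
      (abs_le.mp hrate).2
    have hexp : 0 < Real.exp (c * t) := Real.exp_pos _
    have hNnn : 0 ≤ eNorm (e t) ^ 2 := sq_nonneg _
    have hsum : deriv e t ⬝ᵥ (M t).mulVec (e t) + e t ⬝ᵥ (matDeriv M t).mulVec (e t)
        + e t ⬝ᵥ (M t).mulVec (deriv e t) + c * V t ≤ 0 := by
      have hcV : c * V t ≤ c * (m₁ * eNorm (e t) ^ 2) :=
        mul_le_mul_of_nonneg_left hub hcpos.le
      have : c * (m₁ * eNorm (e t) ^ 2) = (2 * k - γ) * eNorm (e t) ^ 2 := by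
        rw [hc]
        field_simp
      rw [h1, h2, hN]
      nlinarith [hcV, habs, hNnn]
    nlinarith [hsum, hexp, mul_le_mul_of_nonneg_right hsum hexp.le]
  have hanti : ∀ t ≥ (0:ℝ), V t * Real.exp (c * t) ≤ V 0 * Real.exp (c * 0) := by
    intro t ht
    have hmono : Antitone (fun s => V s * Real.exp (c * s)) := by
      apply antitone_of_deriv_nonpos
      · exact fun s => ((hg s).differentiableAt)
      · intro s
        rw [(hg s).deriv]
        exact hgle s
    exact hmono ht
  intro t ht
  have h1 : V t ≤ V 0 * Real.exp (-c * t) := by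
    have := hanti t ht
    rw [mul_zero, Real.exp_zero, mul_one] at this
    have h2 : V t = V t * Real.exp (c * t) * Real.exp (-c * t) := by
      rw [mul_assoc, ← Real.exp_add]; ring_nf; simp
    rw [h2]
    exact mul_le_mul_of_nonneg_right this (Real.exp_pos _).le
  have hexp : 0 ≤ Real.exp (-c * t) := (Real.exp_pos _).le
  refine ⟨by simpa [hc] using h1, ?_⟩
  have hlb := hMlb t (e t)
  have hub0 := hMub 0 (e 0)
  have h3 : m₀ * eNorm (e t) ^ 2 ≤ m₁ * eNorm (e 0) ^ 2 * Real.exp (-c * t) := by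
    calc m₀ * eNorm (e t) ^ 2 ≤ V t := hlb
      _ ≤ V 0 * Real.exp (-c * t) := h1
      _ ≤ m₁ * eNorm (e 0) ^ 2 * Real.exp (-c * t) :=
          mul_le_mul_of_nonneg_right hub0 hexp
  have : eNorm (e t) ^ 2 ≤ m₁ / m₀ * eNorm (e 0) ^ 2 * Real.exp (-c * t) := by
    rw [div_mul_eq_mul_div, div_mul_eq_mul_div, le_div_iff₀ hm₀]
    nlinarith [h3]
  simpa [hc] using this
end

section
/- Let k, γ, m₀, m₁ be real numbers with m₀ > 0, m₁ > 0 and 2k > γ. Let M : ℝ → (6×6 real matrices) be a differentiable matrix-valued function such that for every t: M(t) is symmetric and invertible, m₀‖x‖² ≤ xᵀ M(t) x ≤ m₁‖x‖² for all x ∈ ℝ⁶, and |xᵀ M'(t) x| ≤ γ‖x‖² for all x ∈ ℝ⁶. Let T ∈ ℝ⁶ be a constant vector (the true external interaction wrench) and let T̂ : ℝ → ℝ⁶ be a differentiable function satisfying the observer dynamics T̂'(t) = k · M(t)⁻¹ · (T - T̂(t)) for all t. Then T̂(t) → T as t → ∞. -/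
open Matrix

lemma dot_key {n : ℕ} (u v : Fin n → ℝ) (A : Matrix (Fin n) (Fin n) ℝ) :
    u ⬝ᵥ A.mulVec v = ∑ i, ∑ j, u i * (A i j * v j) := by
  simp [dotProduct, mulVec, Finset.mul_sum]

/-- Theorem 1 of the paper: the wrench observer
`T̂' = k M⁻¹ (T - T̂)` with a constant true wrench `T`, gain condition `2k > γ`, uniform
positive-definiteness bounds on `M`, and inertia-rate bound `γ`, ensures `T̂(t) → T`. -/
theorem observer_wrench_convergence
    (k γ m₀ m₁ : ℝ) (hm₀ : 0 < m₀) (hm₁ : 0 < m₁) (hk : 2 * k > γ)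
    (M : ℝ → Matrix (Fin 6) (Fin 6) ℝ)
    (hMdiff : ∀ i j, Differentiable ℝ fun t => M t i j)
    (hMsymm : ∀ t, (M t).IsSymm)
    (hMinv : ∀ t, IsUnit (M t).det)
    (hMlb : ∀ t, ∀ x : Fin 6 → ℝ, m₀ * eNorm x ^ 2 ≤ x ⬝ᵥ (M t).mulVec x)
    (hMub : ∀ t, ∀ x : Fin 6 → ℝ, x ⬝ᵥ (M t).mulVec x ≤ m₁ * eNorm x ^ 2)
    (hMrate : ∀ t, ∀ x : Fin 6 → ℝ, |x ⬝ᵥ (matDeriv M t).mulVec x| ≤ γ * eNorm x ^ 2)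
    (T : Fin 6 → ℝ) (That : ℝ → Fin 6 → ℝ) (hThat : Differentiable ℝ That)
    (hdyn : ∀ t, deriv That t = k • (M t)⁻¹.mulVec (T - That t)) :
    Filter.Tendsto That Filter.atTop (nhds T) := by
  set e : ℝ → Fin 6 → ℝ := fun t => T - That t with he
  set D : ℝ → Fin 6 → ℝ := fun t => k • (M t)⁻¹.mulVec (e t) with hD
  -- derivative of error
  have hE : ∀ t, HasDerivAt e (-(D t)) t := by
    intro t
    have h1 : HasDerivAt That (D t) t := by
      have := (hThat t).hasDerivAt
      rwa [hdyn t] at this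
    have h2 := (hasDerivAt_const t T).sub h1
    rw [zero_sub] at h2
    exact h2
  have hEi : ∀ t i, HasDerivAt (fun s => e s i) (-(D t) i) t :=
    fun t i => hasDerivAt_pi.mp (hE t) i
  have hMij : ∀ t i j, HasDerivAt (fun s => M s i j) (matDeriv M t i j) t :=
    fun t i j => ((hMdiff i j) t).hasDerivAt
  -- Lyapunov function
  set V : ℝ → ℝ := fun t => e t ⬝ᵥ (M t).mulVec (e t) with hV
  set Q : ℝ → ℝ := fun t => e t ⬝ᵥ e t with hQ
  have hQnn : ∀ t, 0 ≤ Q t := fun t => Finset.sum_nonneg fun i _ => mul_self_nonneg _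
  have hQen : ∀ t, Q t = eNorm (e t) ^ 2 := fun t => (eNorm_sq (e t)).symm
  -- derivative of V
  set V' : ℝ → ℝ := fun t => -(2 * k) * Q t + e t ⬝ᵥ (matDeriv M t).mulVec (e t) with hV'
  have hVd : ∀ t, HasDerivAt V (V' t) t := by
    intro t
    have hform : V = fun s => ∑ i, ∑ j, e s i * (M s i j * e s j) := by
      funext s; exact dot_key (e s) (e s) (M s)
    rw [hform]
    have hterm : ∀ i ∈ Finset.univ, ∀ j ∈ (Finset.univ : Finset (Fin 6)),
        HasDerivAt (fun s => e s i * (M s i j * e s j))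
          ((-(D t) i) * (M t i j * e t j)
            + e t i * (matDeriv M t i j * e t j + M t i j * (-(D t) j))) t := by
      intro i _ j _
      exact (hEi t i).mul ((hMij t i j).mul (hEi t j))
    have hsum : HasDerivAt (fun s => ∑ i, ∑ j, e s i * (M s i j * e s j))
        (∑ i, ∑ j, ((-(D t) i) * (M t i j * e t j)
            + e t i * (matDeriv M t i j * e t j + M t i j * (-(D t) j)))) t := by
      apply HasDerivAt.fun_sum
      intro i hi
      exact HasDerivAt.fun_sum (hterm i hi)
    convert hsum using 1
    -- identify the sum with the dot-product expression
    have hsplit : (∑ i, ∑ j, ((-(D t) i) * (M t i j * e t j)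
            + e t i * (matDeriv M t i j * e t j + M t i j * (-(D t) j))))
        = (-(D t)) ⬝ᵥ (M t).mulVec (e t)
          + (e t ⬝ᵥ (matDeriv M t).mulVec (e t) + e t ⬝ᵥ (M t).mulVec (-(D t))) := by
      simp only [dot_key, ← Finset.sum_add_distrib]
      refine Finset.sum_congr rfl fun i _ => ?_
      refine Finset.sum_congr rfl fun j _ => ?_
      simp only [hD, he, Pi.neg_apply, Pi.smul_apply, smul_eq_mul]
      ring
    rw [hsplit]
    -- compute the first and third terms
    have hMsym : (M t)ᵀ = M t := hMsymm t
    have hfst : (-(D t)) ⬝ᵥ (M t).mulVec (e t) = -(k * Q t) := by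
      have h1 : ((M t)⁻¹.mulVec (e t)) ⬝ᵥ (M t).mulVec (e t) = Q t := by
        rw [dotProduct_mulVec, ← mulVec_transpose, hMsym, mulVec_mulVec,
          Matrix.mul_nonsing_inv _ (hMinv t), one_mulVec]
      rw [hD]
      simp only [neg_dotProduct, smul_dotProduct, smul_eq_mul, h1]
    have hthd : e t ⬝ᵥ (M t).mulVec (-(D t)) = -(k * Q t) := by
      have h2 : (M t).mulVec (-(D t)) = -(k • e t) := by
        rw [hD]
        rw [Matrix.mulVec_neg, mulVec_smul, mulVec_mulVec,
          Matrix.mul_nonsing_inv _ (hMinv t), one_mulVec]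
      rw [h2]
      simp [dotProduct_smul, hQ, mul_comm]
    rw [hfst, hthd, hV']
    ring
  -- Lyapunov bounds
  have hVlb : ∀ t, m₀ * Q t ≤ V t := by
    intro t; rw [hQen t]; exact hMlb t (e t)
  have hVub : ∀ t, V t ≤ m₁ * Q t := by
    intro t; rw [hQen t]; exact hMub t (e t)
  have hVnn : ∀ t, 0 ≤ V t := fun t =>
    le_trans (mul_nonneg hm₀.le (hQnn t)) (hVlb t)
  have hrate : ∀ t, |e t ⬝ᵥ (matDeriv M t).mulVec (e t)| ≤ γ * Q t := by
    intro t; rw [hQen t]; exact hMrate t (e t)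
  set lam : ℝ := (2 * k - γ) / m₁ with hlam
  have hlampos : 0 < lam := div_pos (by linarith) hm₁
  have hVd_le : ∀ t, V' t ≤ -lam * V t := by
    intro t
    have h1 := (abs_le.mp (hrate t)).2
    have h2 := hVub t
    have h3 := hQnn t
    have h4 := hVnn t
    have hpos : 0 < 2 * k - γ := by linarith
    have key : lam * V t ≤ (2 * k - γ) * Q t := by
      rw [hlam, div_mul_eq_mul_div, div_le_iff₀ hm₁]
      nlinarith
    simp only [hV']
    linarith
  -- W = V * exp(lam t) is antitone
  set W : ℝ → ℝ := fun t => V t * Real.exp (lam * t) with hW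
  have hWd : ∀ t, HasDerivAt W (V' t * Real.exp (lam * t)
      + V t * (Real.exp (lam * t) * lam)) t := by
    intro t
    have hexp' : HasDerivAt (fun s : ℝ => Real.exp (lam * s))
        (Real.exp (lam * t) * lam) t := by
      simpa using ((hasDerivAt_id t).const_mul lam).exp
    exact (hVd t).mul hexp'
  have hWanti : Antitone W := by
    apply antitone_of_deriv_nonpos
    · exact fun t => (hWd t).differentiableAt
    · intro t
      rw [(hWd t).deriv]
      have h1 := hVd_le t
      have h2 := Real.exp_pos (lam * t)
      nlinarith
  have hVdecay : ∀ t : ℝ, 0 ≤ t → V t ≤ V 0 * Real.exp (-(lam * t)) := by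
    intro t ht
    have := hWanti ht
    rw [hW] at this
    simp only [mul_zero, Real.exp_zero, mul_one] at this
    rw [Real.exp_neg, ← div_eq_mul_inv, le_div_iff₀ (Real.exp_pos _)]
    exact this
  -- Q tends to 0
  have hQtend : Filter.Tendsto Q Filter.atTop (nhds 0) := by
    have hub : ∀ᶠ t in Filter.atTop, Q t ≤ (V 0 / m₀) * Real.exp (-(lam * t)) := by
      filter_upwards [Filter.eventually_ge_atTop 0] with t ht
      have h1 := hVlb t
      have h2 := hVdecay t ht
      rw [div_mul_eq_mul_div, le_div_iff₀ hm₀]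
      nlinarith
    have hexp : Filter.Tendsto (fun t => (V 0 / m₀) * Real.exp (-(lam * t)))
        Filter.atTop (nhds 0) := by
      have h1 : Filter.Tendsto (fun t : ℝ => lam * t) Filter.atTop Filter.atTop :=
        Filter.Tendsto.const_mul_atTop hlampos Filter.tendsto_id
      have h2 : Filter.Tendsto (fun t : ℝ => Real.exp (-(lam * t)))
          Filter.atTop (nhds 0) :=
        Real.tendsto_exp_neg_atTop_nhds_zero.comp h1
      simpa using h2.const_mul (V 0 / m₀)
    exact tendsto_of_tendsto_of_tendsto_of_le_of_le' tendsto_const_nhds hexp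
      (Filter.Eventually.of_forall hQnn) hub
  -- each component of e tends to 0
  have hcomp : ∀ i, Filter.Tendsto (fun t => e t i) Filter.atTop (nhds 0) := by
    intro i
    have hsq : Filter.Tendsto (fun t => (e t i) ^ 2) Filter.atTop (nhds 0) := by
      refine tendsto_of_tendsto_of_tendsto_of_le_of_le' tendsto_const_nhds hQtend
        (Filter.Eventually.of_forall fun t => sq_nonneg _)
        (Filter.Eventually.of_forall fun t => ?_)
      rw [hQ]
      have : (e t i) * (e t i) ≤ ∑ j, e t j * e t j :=
        Finset.single_le_sum (fun j _ => mul_self_nonneg (e t j)) (Finset.mem_univ i)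
      calc (e t i) ^ 2 = e t i * e t i := sq _
        _ ≤ _ := this
    have habs : Filter.Tendsto (fun t => |e t i|) Filter.atTop (nhds 0) := by
      have h := (Real.continuous_sqrt.tendsto 0).comp hsq
      rw [Real.sqrt_zero] at h
      exact h.congr fun t => by simp [Real.sqrt_sq_eq_abs]
    exact tendsto_zero_iff_abs_tendsto_zero _ |>.mpr habs
  -- conclude
  rw [tendsto_pi_nhds]
  intro i
  have : Filter.Tendsto (fun t => T i - e t i) Filter.atTop (nhds (T i)) := by
    have := (tendsto_const_nhds (x := T i) (f := Filter.atTop)).sub (hcomp i)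
    simpa using this
  refine this.congr fun t => ?_
  simp [he]
end

section
/- Let k be a real number. Let η : ℝ → ℝ⁶ be twice differentiable, let M : ℝ → (6×6 real matrices) be such that M(t) is invertible for every t, let F : ℝ → ℝ⁶ be any function (representing the known terms C(η,η̇)η̇ + G + A(η)u), and define the external wrench T(t) = M(t) · η''(t) + F(t). Suppose δ : ℝ → ℝ⁶ is differentiable and satisfies the acceleration-free observer dynamics δ'(t) = -k · M(t)⁻¹ · δ(t) + k · M(t)⁻¹ · (F(t) - k η'(t)) for all t, and define the wrench estimate T̂(t) = δ(t) + k η'(t). Then T̂ is differentiable and satisfies T̂'(t) = k · M(t)⁻¹ · (T(t) - T̂(t)) for all t. -/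
open Matrix

/-- the acceleration-free implementation of the wrench observer.
With auxiliary state `δ' = -k M⁻¹ δ + k M⁻¹ (F - k η')` and estimate `T̂ = δ + k η'`,
where the true wrench is `T = M η'' + F`, the estimate satisfies the original
observer dynamics `T̂' = k M⁻¹ (T - T̂)`. -/
theorem acceleration_free_observer
    (k : ℝ) (η : ℝ → Fin 6 → ℝ)
    (hη : Differentiable ℝ η) (hη' : Differentiable ℝ (deriv η))
    (M : ℝ → Matrix (Fin 6) (Fin 6) ℝ) (hMinv : ∀ t, IsUnit (M t).det)
    (F : ℝ → Fin 6 → ℝ)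
    (T : ℝ → Fin 6 → ℝ)
    (hT : ∀ t, T t = (M t).mulVec (deriv (deriv η) t) + F t)
    (δ : ℝ → Fin 6 → ℝ) (hδ : Differentiable ℝ δ)
    (hδdyn : ∀ t, deriv δ t
        = (-k) • (M t)⁻¹.mulVec (δ t) + k • (M t)⁻¹.mulVec (F t - k • deriv η t))
    (That : ℝ → Fin 6 → ℝ)
    (hThat : ∀ t, That t = δ t + k • deriv η t) :
    Differentiable ℝ That ∧
      ∀ t, deriv That t = k • (M t)⁻¹.mulVec (T t - That t) := by
  have hfun : That = fun t => δ t + k • deriv η t := funext hThat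
  have hdiff : Differentiable ℝ That := by
    rw [hfun]; exact hδ.add (hη'.const_smul k)
  refine ⟨hdiff, fun t => ?_⟩
  have hder : deriv That t = deriv δ t + k • deriv (deriv η) t := by
    rw [hfun]
    rw [deriv_fun_add (g := fun y => k • deriv η y) (hδ t) ((hη'.const_smul k) t)]
    congr 1
    exact deriv_const_smul k (hη' t)
  rw [hder, hδdyn, hT, hThat]
  have hMM : (M t)⁻¹.mulVec ((M t).mulVec (deriv (deriv η) t)) = deriv (deriv η) t := by
    rw [mulVec_mulVec, Matrix.nonsing_inv_mul _ (hMinv t), one_mulVec]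
  have h1 : ((M t).mulVec (deriv (deriv η) t) + F t - (δ t + k • deriv η t))
      = (M t).mulVec (deriv (deriv η) t) + ((F t - k • deriv η t) - δ t) := by
    abel
  rw [h1, mulVec_add, smul_add, hMM]
  simp only [mulVec_add, mulVec_sub, Matrix.mulVec_smul, smul_add, smul_sub, neg_smul, smul_smul]
  abel
end

section
/- Let k, γ, ε be real numbers with ε ≥ 0. Let M : ℝ → (6×6 real matrices) be a differentiable matrix-valued function such that M(t) is symmetric and invertible for every t and |xᵀ M'(t) x| ≤ γ‖x‖² for all t and x ∈ ℝ⁶. Let Δ : ℝ → ℝ⁶ satisfy ‖Δ(t)‖ ≤ ε for all t, and let e : ℝ → ℝ⁶ be differentiable with e'(t) = -k · M(t)⁻¹ · e(t) - k · M(t)⁻¹ · Δ(t) for all t, where k > 0. Then the Lyapunov function V(t) = e(t)ᵀ M(t) e(t) satisfies V'(t) ≤ -(2k - γ)‖e(t)‖² + 2kε‖e(t)‖ for all t; in particular, if 2k > γ, then V'(t) < 0 at every time t at which ‖e(t)‖ > 2kε/(2k - γ). -/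
open Matrix

lemma dot_self_nonneg' {n : ℕ} (x : Fin n → ℝ) : 0 ≤ x ⬝ᵥ x :=
  Finset.sum_nonneg fun _ _ => mul_self_nonneg _

lemma eNorm_nonneg {n : ℕ} (x : Fin n → ℝ) : 0 ≤ eNorm x := Real.sqrt_nonneg _

lemma abs_dot_le {n : ℕ} (x y : Fin n → ℝ) : |x ⬝ᵥ y| ≤ eNorm x * eNorm y := by
  have h := abs_real_inner_le_norm ((WithLp.equiv 2 (Fin n → ℝ)).symm x)
    ((WithLp.equiv 2 (Fin n → ℝ)).symm y)
  simpa [eNorm, PiLp.inner_apply, EuclideanSpace.norm_eq, dotProduct, sq, mul_comm] using h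

lemma symm_dot {n : ℕ} (A : Matrix (Fin n) (Fin n) ℝ) (hA : A.IsSymm) (v w : Fin n → ℝ) :
    v ⬝ᵥ A.mulVec w = w ⬝ᵥ A.mulVec v := by
  rw [Matrix.dotProduct_mulVec, ← Matrix.mulVec_transpose, hA.eq, dotProduct_comm]

lemma inv_dot {n : ℕ} (A : Matrix (Fin n) (Fin n) ℝ) (hA : A.IsSymm) (hinv : IsUnit A.det)
    (v w : Fin n → ℝ) : A⁻¹.mulVec v ⬝ᵥ A.mulVec w = v ⬝ᵥ w := by
  rw [dotProduct_comm, Matrix.dotProduct_mulVec, ← Matrix.mulVec_transpose,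
    Matrix.mulVec_mulVec, Matrix.transpose_nonsing_inv, hA.eq, Matrix.nonsing_inv_mul _ hinv,
    Matrix.one_mulVec, dotProduct_comm]

lemma hasDerivAt_V (M : ℝ → Matrix (Fin 6) (Fin 6) ℝ)
    (hMdiff : ∀ i j, Differentiable ℝ fun t => M t i j)
    (e : ℝ → Fin 6 → ℝ) (he : Differentiable ℝ e) (t : ℝ) :
    HasDerivAt (fun s => e s ⬝ᵥ (M s).mulVec (e s))
      (deriv e t ⬝ᵥ (M t).mulVec (e t) + e t ⬝ᵥ (matDeriv M t).mulVec (e t)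
        + e t ⬝ᵥ (M t).mulVec (deriv e t)) t := by
  have he' : HasDerivAt e (deriv e t) t := (he t).hasDerivAt
  have hei : ∀ i, HasDerivAt (fun s => e s i) (deriv e t i) t := hasDerivAt_pi.mp he'
  have hM : ∀ i j, HasDerivAt (fun s => M s i j) (matDeriv M t i j) t := fun i j =>
    ((hMdiff i j) t).hasDerivAt
  have key : HasDerivAt (fun s => ∑ i, ∑ j, e s i * (M s i j * e s j))
      (∑ i, ∑ j, (deriv e t i * (M t i j * e t j)
        + e t i * (matDeriv M t i j * e t j + M t i j * deriv e t j))) t := by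
    apply HasDerivAt.fun_sum
    intro i _
    apply HasDerivAt.fun_sum
    intro j _
    exact (hei i).mul ((hM i j).mul (hei j))
  have h1 : (fun s => e s ⬝ᵥ (M s).mulVec (e s))
      = fun s => ∑ i, ∑ j, e s i * (M s i j * e s j) := by
    funext s
    simp [dotProduct, mulVec, Finset.mul_sum]
  rw [h1]
  convert key using 1
  simp only [dotProduct, mulVec, Finset.mul_sum, ← Finset.sum_add_distrib]
  refine Finset.sum_congr rfl fun i _ => ?_
  refine Finset.sum_congr rfl fun j _ => ?_
  ring

/-- robustness estimate. Under a bounded disturbance `‖Δ‖ ≤ ε`, the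
Lyapunov derivative satisfies `V̇ ≤ -(2k - γ)‖e‖² + 2kε‖e‖`; in particular if `2k > γ`
then `V̇ < 0` whenever `‖e‖ > 2kε/(2k - γ)`. -/
theorem lyapunov_robustness_estimate
    (k γ ε : ℝ) (hε : 0 ≤ ε) (hk : 0 < k)
    (M : ℝ → Matrix (Fin 6) (Fin 6) ℝ)
    (hMdiff : ∀ i j, Differentiable ℝ fun t => M t i j)
    (hMsymm : ∀ t, (M t).IsSymm)
    (hMinv : ∀ t, IsUnit (M t).det)
    (hMrate : ∀ t, ∀ x : Fin 6 → ℝ, |x ⬝ᵥ (matDeriv M t).mulVec x| ≤ γ * eNorm x ^ 2)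
    (Δ : ℝ → Fin 6 → ℝ) (hΔ : ∀ t, eNorm (Δ t) ≤ ε)
    (e : ℝ → Fin 6 → ℝ) (he : Differentiable ℝ e)
    (hdyn : ∀ t, deriv e t = (-k) • (M t)⁻¹.mulVec (e t) - k • (M t)⁻¹.mulVec (Δ t)) :
    (∀ t, deriv (fun s => e s ⬝ᵥ (M s).mulVec (e s)) t
        ≤ -(2 * k - γ) * eNorm (e t) ^ 2 + 2 * k * ε * eNorm (e t)) ∧
    (2 * k > γ → ∀ t, eNorm (e t) > 2 * k * ε / (2 * k - γ) →
        deriv (fun s => e s ⬝ᵥ (M s).mulVec (e s)) t < 0) := by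
  have main : ∀ t, deriv (fun s => e s ⬝ᵥ (M s).mulVec (e s)) t
      ≤ -(2 * k - γ) * eNorm (e t) ^ 2 + 2 * k * ε * eNorm (e t) := by
    intro t
    have hV := hasDerivAt_V M hMdiff e he t
    rw [hV.deriv]
    -- rewrite the first and third terms
    have h3 : e t ⬝ᵥ (M t).mulVec (deriv e t) = deriv e t ⬝ᵥ (M t).mulVec (e t) :=
      symm_dot (M t) (hMsymm t) _ _
    have h1 : deriv e t ⬝ᵥ (M t).mulVec (e t)
        = -(k * (e t ⬝ᵥ e t)) - k * (Δ t ⬝ᵥ e t) := by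
      rw [hdyn t]
      rw [sub_dotProduct, smul_dotProduct, smul_dotProduct,
        inv_dot (M t) (hMsymm t) (hMinv t), inv_dot (M t) (hMsymm t) (hMinv t)]
      simp [smul_eq_mul]
    rw [h3, h1]
    have hee : e t ⬝ᵥ e t = eNorm (e t) ^ 2 := (eNorm_sq (e t)).symm
    have hrate := hMrate t (e t)
    have hcs : |Δ t ⬝ᵥ e t| ≤ ε * eNorm (e t) := by
      calc |Δ t ⬝ᵥ e t| ≤ eNorm (Δ t) * eNorm (e t) := abs_dot_le _ _
        _ ≤ ε * eNorm (e t) := by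
            exact mul_le_mul_of_nonneg_right (hΔ t) (eNorm_nonneg _)
    have h4 : e t ⬝ᵥ (matDeriv M t).mulVec (e t) ≤ γ * eNorm (e t) ^ 2 :=
      (le_abs_self _).trans hrate
    have h5 : -(Δ t ⬝ᵥ e t) ≤ ε * eNorm (e t) := (neg_le_abs _).trans hcs
    rw [hee]
    nlinarith [hk.le]
  refine ⟨main, fun hkγ t ht => ?_⟩
  have hr : 0 < eNorm (e t) := by
    have : (0:ℝ) ≤ 2 * k * ε / (2 * k - γ) := div_nonneg (by positivity) (by linarith)
    linarith
  have h2 : 2 * k * ε < (2 * k - γ) * eNorm (e t) := by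
    rw [gt_iff_lt, div_lt_iff₀ (by linarith)] at ht
    linarith [ht]
  calc deriv (fun s => e s ⬝ᵥ (M s).mulVec (e s)) t
      ≤ -(2 * k - γ) * eNorm (e t) ^ 2 + 2 * k * ε * eNorm (e t) := main t
    _ < 0 := by nlinarith
end
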